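/- For every integer p ≥ 0: Res_{ħ=0}( ((1+ħ)^n − 1)/(ħ³ ∏_{k=1}^r(d_k+ħ)) · ( 1 − ∑_{β≥0} ∑_{l=0}^{p−νβ} c̃_{p,l}^{(β)} q^β ħ^{p−νβ−l} ) ) = (n/∏_{k=1}^r d_k) · ( ((n−1)/2 − ∑_{k=1}^r 1/d_k)·(1 − ∑_{β=0}^{⌊p/ν⌋} c̃_{p,p−νβ}^{(β)} q^β) − ∑_{β=0}^{⌊p/ν⌋} c̃_{p,p−νβ−1}^{(β)} q^β ), an identity in ℚ[[q]]. Here ((1+ħ)^n − 1)/(ħ³ ∏_{k}(d_k+ħ)) is expanded as a Laurent series at ħ = 0 (each d_k + ħ has nonzero constant term d_k), the inner sum over β and l is a q-power series whose q-coefficients are Laurent polynomials in ħ, and Res_{ħ=0} takes in each q-coefficient the coefficient of ħ^{−1}. -/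

import Mathlib

/-- The Laurent-series variable `ħ`. -/
noncomputable def Zl : LaurentSeries ℚ := HahnSeries.single (1 : ℤ) (1 : ℚ)

/-- `Res_{ħ=0}`: in each q-coefficient take the coefficient of `ħ⁻¹`. -/
noncomputable def resH (f : PowerSeries (LaurentSeries ℚ)) : PowerSeries ℚ :=
  PowerSeries.mk fun β => (PowerSeries.coeff (R := LaurentSeries ℚ) β f).coeff (-1)

/-- The coefficients `c_{p,l}^{(β)}`. -/
noncomputable def ccoef (n r : ℕ) (d : Fin r → ℕ) (p β : ℕ) (l : ℤ) : ℚ :=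
  if l < 0 then 0 else
    PowerSeries.coeff (R := ℚ) l.toNat
      (((PowerSeries.X + (β : PowerSeries ℚ)) ^ p *
          ∏ k : Fin r, ∏ i ∈ Finset.range (d k * β),
            ((d k : PowerSeries ℚ) * PowerSeries.X + ((i + 1 : ℕ) : PowerSeries ℚ))) *
        (∏ j ∈ Finset.range β, (PowerSeries.X + ((j + 1 : ℕ) : PowerSeries ℚ)) ^ n)⁻¹)

open PowerSeries Finset

section Aux

noncomputable def Sser (n : ℕ) : PowerSeries ℚ := PowerSeries.mk fun i => (n.choose (i+1) : ℚ)
noncomputable def Pser (r : ℕ) (d : Fin r → ℕ) : ℚ⟦X⟧ := ∏ k : Fin r, ((d k : ℚ⟦X⟧) + X)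
noncomputable def Gser (n r : ℕ) (d : Fin r → ℕ) : ℚ⟦X⟧ := Sser n * (Pser r d)⁻¹

lemma coeff1_prod {ι : Type*} [DecidableEq ι] (s : Finset ι) (a : ι → ℚ) :
    PowerSeries.coeff (R := ℚ) 1 (∏ k ∈ s, ((C (R := ℚ) (a k)) + X)) =
      ∑ k ∈ s, ∏ j ∈ s.erase k, a j := by
  induction s using Finset.induction with
  | empty => simp
  | @insert i s hi ih =>
    rw [Finset.prod_insert hi, Finset.sum_insert hi]
    rw [show (1:ℕ) = 0 + 1 from rfl, PowerSeries.coeff_mul]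
    rw [Finset.Nat.sum_antidiagonal_eq_sum_range_succ_mk]
    rw [Finset.sum_range_succ, Finset.sum_range_one]
    simp only [Nat.sub_zero, Nat.sub_self]
    rw [ih]
    simp only [map_add, PowerSeries.coeff_zero_C, coeff_zero_X, PowerSeries.coeff_C,
      coeff_one_X, coeff_zero_eq_constantCoeff, add_zero, zero_add, one_ne_zero, if_false,
      if_true, Finset.mul_sum, one_mul]
    rw [map_prod]
    simp only [map_add, constantCoeff_C, constantCoeff_X, add_zero]
    rw [Finset.erase_insert hi, add_comm]
    congr 1
    refine Finset.sum_congr rfl fun k hk => ?_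
    rw [Finset.erase_insert_of_ne (by rintro rfl; exact hi hk)]
    rw [Finset.prod_insert (fun h => hi (Finset.mem_of_mem_erase h))]

lemma coeff_one_add_X_pow (n j : ℕ) :
    PowerSeries.coeff (R := ℚ) j ((1 + X)^n) = (n.choose j : ℚ) := by
  have : ((1 : ℚ⟦X⟧) + X)^n = ((((1 + Polynomial.X)^n : Polynomial ℚ) : ℚ⟦X⟧)) := by
    rw [Polynomial.coe_pow, Polynomial.coe_add, Polynomial.coe_one, Polynomial.coe_X]
  rw [this, Polynomial.coeff_coe, Polynomial.coeff_one_add_X_pow]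

lemma X_mul_Sser (n : ℕ) : X * Sser n = (1 + X)^n - 1 := by
  ext j
  rw [map_sub, coeff_one_add_X_pow]
  cases j with
  | zero => simp [Sser]
  | succ i => simp [Sser, PowerSeries.coeff_succ_X_mul, PowerSeries.coeff_one]

variable (n r : ℕ) (d : Fin r → ℕ)

lemma Pser_eq : Pser r d = ∏ k : Fin r, ((C (R := ℚ) ((d k : ℚ))) + X) := by
  simp [Pser, map_natCast]

lemma dq_ne (hd : ∀ k, 2 ≤ d k) (k : Fin r) : ((d k : ℚ)) ≠ 0 := by
  have := hd k; positivity

lemma Dq_ne (hd : ∀ k, 2 ≤ d k) : (∏ k : Fin r, (d k : ℚ)) ≠ 0 :=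
  Finset.prod_ne_zero_iff.2 fun k _ => dq_ne r d hd k

lemma P0 : constantCoeff (R := ℚ) (Pser r d) = ∏ k : Fin r, (d k : ℚ) := by
  rw [Pser_eq, map_prod]; simp

lemma P1 (hd : ∀ k, 2 ≤ d k) : PowerSeries.coeff (R := ℚ) 1 (Pser r d) =
    (∏ k : Fin r, (d k : ℚ)) * ∑ k : Fin r, 1 / (d k : ℚ) := by
  rw [Pser_eq, coeff1_prod, Finset.mul_sum]
  refine Finset.sum_congr rfl fun k _ => ?_
  rw [← Finset.prod_erase_mul Finset.univ _ (Finset.mem_univ k)]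
  rw [mul_one_div, mul_div_assoc, div_self (dq_ne r d hd k), mul_one]

lemma PG (hd : ∀ k, 2 ≤ d k) : Pser r d * Gser n r d = Sser n := by
  rw [Gser, mul_comm (Sser n), ← mul_assoc,
    PowerSeries.mul_inv_cancel _ (by rw [P0]; exact Dq_ne r d hd), one_mul]

lemma G0 (hd : ∀ k, 2 ≤ d k) :
    PowerSeries.coeff (R := ℚ) 0 (Gser n r d) = (n : ℚ) / ∏ k : Fin r, (d k : ℚ) := by
  have h := congrArg (PowerSeries.coeff (R := ℚ) 0) (PG n r d hd)
  rw [coeff_zero_eq_constantCoeff, map_mul, P0] at h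
  have hS : constantCoeff (R := ℚ) (Sser n) = (n : ℚ) := by simp [Sser, ← coeff_zero_eq_constantCoeff]
  rw [hS] at h
  rw [coeff_zero_eq_constantCoeff, eq_div_iff (Dq_ne r d hd), mul_comm, h]

lemma G1 (hd : ∀ k, 2 ≤ d k) : PowerSeries.coeff (R := ℚ) 1 (Gser n r d) =
    ((n : ℚ) / ∏ k : Fin r, (d k : ℚ)) * (((n:ℚ) - 1) / 2 - ∑ k : Fin r, 1 / (d k : ℚ)) := by
  have h := congrArg (PowerSeries.coeff (R := ℚ) 1) (PG n r d hd)
  rw [show (1:ℕ) = 0 + 1 from rfl, PowerSeries.coeff_mul,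
    Finset.Nat.sum_antidiagonal_eq_sum_range_succ_mk, Finset.sum_range_succ,
    Finset.sum_range_one] at h
  simp only [Nat.sub_zero, Nat.sub_self, coeff_zero_eq_constantCoeff] at h
  rw [P0, P1 r d hd] at h
  have hg0 : constantCoeff (R := ℚ) (Gser n r d) = (n : ℚ) / ∏ k : Fin r, (d k : ℚ) := by
    rw [← coeff_zero_eq_constantCoeff]; exact G0 n r d hd
  rw [hg0] at h
  have hS : PowerSeries.coeff (R := ℚ) 1 (Sser n) = (n : ℚ) * ((n : ℚ) - 1) / 2 := by
    simp [Sser, Nat.cast_choose_two]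
  rw [hS] at h
  have hD := Dq_ne r d hd
  have key : (∏ k : Fin r, (d k:ℚ)) * (∑ k : Fin r, 1 / (d k:ℚ)) * ((n:ℚ) / ∏ k : Fin r, (d k:ℚ))
      = (n:ℚ) * ∑ k : Fin r, 1 / (d k:ℚ) := by
    field_simp
  rw [key] at h
  have h2 : PowerSeries.coeff (R := ℚ) 1 (Gser n r d)
      = ((n:ℚ) * ((n:ℚ)-1)/2 - (n:ℚ) * ∑ k : Fin r, 1 / (d k:ℚ)) / ∏ k : Fin r, (d k:ℚ) := by
    rw [eq_div_iff hD]
    linarith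
  rw [h2]
  field_simp

lemma Zl_eq : Zl = HahnSeries.ofPowerSeries ℤ ℚ X := by
  rw [HahnSeries.ofPowerSeries_X]; rfl

lemma Dd_eq : Zl ^ 3 * ∏ k : Fin r, ((d k : LaurentSeries ℚ) + Zl) =
    HahnSeries.ofPowerSeries ℤ ℚ (X ^ 3 * Pser r d) := by
  rw [Pser, map_mul, map_pow, map_prod, ← Zl_eq]
  congr 1
  refine Finset.prod_congr rfl fun k _ => ?_
  rw [map_add, map_natCast, ← Zl_eq]

lemma Dd_ne (hd : ∀ k, 2 ≤ d k) :
    Zl ^ 3 * ∏ k : Fin r, ((d k : LaurentSeries ℚ) + Zl) ≠ 0 := by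
  rw [Dd_eq]
  intro h
  have h2 : (X ^ 3 * Pser r d : ℚ⟦X⟧) = 0 := by
    apply HahnSeries.ofPowerSeries_injective (Γ := ℤ)
    rw [h, map_zero]
  have hX : (X : ℚ⟦X⟧) ^ 3 ≠ 0 := pow_ne_zero _ PowerSeries.X_ne_zero
  have hP : Pser r d ≠ 0 := fun hh => Dq_ne r d hd (by rw [← P0, hh, map_zero])
  exact (mul_ne_zero hX hP) h2

lemma Fmain_eq (hd : ∀ k, 2 ≤ d k) :
    ((1 + Zl) ^ n - 1) / (Zl ^ 3 * ∏ k : Fin r, ((d k : LaurentSeries ℚ) + Zl)) =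
      HahnSeries.single (-2 : ℤ) (1 : ℚ) * HahnSeries.ofPowerSeries ℤ ℚ (Gser n r d) := by
  rw [div_eq_iff (Dd_ne r d hd), Dd_eq]
  have hN : (1 + Zl) ^ n - 1 = HahnSeries.ofPowerSeries ℤ ℚ ((1 + X) ^ n - 1) := by
    rw [Zl_eq, map_sub, map_pow, map_add, map_one]
  rw [hN, ← X_mul_Sser, ← PG n r d hd]
  rw [show HahnSeries.ofPowerSeries ℤ ℚ ((X:ℚ⟦X⟧) ^ 3 * Pser r d) =
      HahnSeries.single (3 : ℤ) (1 : ℚ) * HahnSeries.ofPowerSeries ℤ ℚ (Pser r d) from by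
    rw [map_mul, map_pow, HahnSeries.ofPowerSeries_X, HahnSeries.single_pow]; norm_num]
  rw [map_mul, HahnSeries.ofPowerSeries_X, map_mul]
  rw [show (HahnSeries.single (1:ℤ) (1:ℚ)) =
      HahnSeries.single (-2:ℤ) (1:ℚ) * HahnSeries.single (3:ℤ) (1:ℚ) from by
    rw [HahnSeries.single_mul_single]; norm_num]
  ring

lemma Fmain_coeff (hd : ∀ k, 2 ≤ d k) (j : ℤ) :
    (((1 + Zl) ^ n - 1) / (Zl ^ 3 * ∏ k : Fin r, ((d k : LaurentSeries ℚ) + Zl))).coeff j =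
      if j + 2 < 0 then 0 else PowerSeries.coeff (R := ℚ) (j+2).natAbs (Gser n r d) := by
  rw [Fmain_eq n r d hd]
  have : j = (j + 2) + (-2) := by ring
  rw [this, HahnSeries.coeff_single_mul_add, one_mul]
  rw [PowerSeries.coeff_coe]
  norm_num

lemma hahn_sum_coeff {α : Type*} (s : Finset α) (f : α → LaurentSeries ℚ) (x : ℤ) :
    (∑ i ∈ s, f i).coeff x = ∑ i ∈ s, (f i).coeff x := by
  induction s using Finset.cons_induction with
  | empty => simp
  | cons i s hi ih => rw [Finset.sum_cons, Finset.sum_cons, HahnSeries.coeff_add, ih]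

end Aux

theorem stmt11 (n r : ℕ) (hr : 1 ≤ r) (d : Fin r → ℕ) (hd : ∀ k, 2 ≤ d k)
    (m D : ℕ) (hm : m = ∑ k, d k) (hD : D = ∏ k, d k ^ d k)
    (ν : ℕ) (hν : ν = n - m) (hmn : m < n)
    -- the coefficients c̃_{p,l}^{(β)}
    (ct : ℕ → ℤ → ℕ → ℚ)
    (hct0 : ∀ (p : ℕ) (l : ℤ), ct p l 0 = if l = (p : ℤ) then 1 else 0)
    (hctz : ∀ (p : ℕ) (l : ℤ) (β : ℕ),
      (l < 0 ∨ (p : ℤ) - (ν : ℤ) * (β : ℤ) < l) → ct p l β = 0)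
    (hctrec : ∀ (p : ℕ) (l : ℤ) (β : ℕ), 1 ≤ β → 0 ≤ l → l ≤ (p : ℤ) - (ν : ℤ) * (β : ℤ) →
      ct p l β = -∑ β₁ ∈ Finset.range β, ∑ k ∈ Finset.Icc (0 : ℤ) ((p : ℤ) - (ν : ℤ) * (β₁ : ℤ)),
        ct p k β₁ * ccoef n r d k.toNat (β - β₁) l)
    -- the series ∑_{β≥0} ∑_{l=0}^{p−νβ} c̃_{p,l}^{(β)} q^β ħ^{p−νβ−l}
    (Sp : ℕ → PowerSeries (LaurentSeries ℚ))
    (hSp : ∀ (p β : ℕ), PowerSeries.coeff (R := LaurentSeries ℚ) β (Sp p) =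
      ∑ l ∈ Finset.Icc (0 : ℤ) ((p : ℤ) - (ν : ℤ) * (β : ℤ)),
        HahnSeries.single ((p : ℤ) - (ν : ℤ) * (β : ℤ) - l) (ct p l β)) :
    ∀ p : ℕ,
      resH (PowerSeries.C (R := LaurentSeries ℚ)
          (((1 + Zl) ^ n - 1) / (Zl ^ 3 * ∏ k : Fin r, ((d k : LaurentSeries ℚ) + Zl))) *
          (1 - Sp p))
        = PowerSeries.C (R := ℚ) ((n : ℚ) / ∏ k : Fin r, (d k : ℚ)) *
            (PowerSeries.C (R := ℚ) (((n : ℚ) - 1) / 2 - ∑ k : Fin r, 1 / (d k : ℚ)) *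
              (1 - ∑ β ∈ Finset.range (p / ν + 1),
                PowerSeries.C (R := ℚ) (ct p ((p : ℤ) - (ν : ℤ) * (β : ℤ)) β) * PowerSeries.X ^ β)
            - ∑ β ∈ Finset.range (p / ν + 1),
                PowerSeries.C (R := ℚ) (ct p ((p : ℤ) - (ν : ℤ) * (β : ℤ) - 1) β) *
                  PowerSeries.X ^ β) := by
  intro p
  have hν1 : 0 < ν := by omega
  set F : LaurentSeries ℚ :=
    ((1 + Zl) ^ n - 1) / (Zl ^ 3 * ∏ k : Fin r, ((d k : LaurentSeries ℚ) + Zl)) with hF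
  set Bq : ℚ := (n : ℚ) / ∏ k : Fin r, (d k : ℚ) with hBq
  set Aq : ℚ := ((n:ℚ) - 1) / 2 - ∑ k : Fin r, 1 / (d k : ℚ) with hAq
  have hFm1 : F.coeff (-1) = Bq * Aq := by
    rw [hF, Fmain_coeff n r d hd]
    norm_num
    exact G1 n r d hd
  have hFm2 : F.coeff (-2) = Bq := by
    rw [hF, Fmain_coeff n r d hd]
    norm_num
    rw [← coeff_zero_eq_constantCoeff]
    exact G0 n r d hd
  have hFlow : ∀ a : ℤ, 2 ≤ a → F.coeff (-1 - a) = 0 := by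
    intro a ha
    rw [hF, Fmain_coeff n r d hd, if_pos (by omega)]
  ext β
  rw [resH, PowerSeries.coeff_mk, PowerSeries.coeff_C_mul, map_sub, hSp,
    PowerSeries.coeff_one]
  set M : ℤ := (p : ℤ) - (ν : ℤ) * (β : ℤ) with hM
  rw [mul_sub, Finset.mul_sum, HahnSeries.coeff_sub, hahn_sum_coeff]
  -- evaluate the first term
  have t1 : (F * (if β = 0 then (1:LaurentSeries ℚ) else 0)).coeff (-1)
      = if β = 0 then Bq * Aq else 0 := by
    split_ifs
    · rw [mul_one, hFm1]
    · rw [mul_zero, HahnSeries.coeff_zero]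
  -- evaluate the sum
  have t2 : ∑ l ∈ Finset.Icc (0:ℤ) M, (F * HahnSeries.single (M - l) (ct p l β)).coeff (-1)
      = Bq * Aq * ct p M β + Bq * ct p (M-1) β := by
    have hpt : ∀ l ∈ Finset.Icc (0:ℤ) M,
        (F * HahnSeries.single (M - l) (ct p l β)).coeff (-1)
        = (if l = M then Bq * Aq * ct p M β else 0)
          + (if l = M - 1 then Bq * ct p (M-1) β else 0) := by
      intro l hl
      obtain ⟨hl0, hlM⟩ := Finset.mem_Icc.mp hl
      have hcoe : ((-1:ℤ)) = (-1 - (M - l)) + (M - l) := by ring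
      rw [hcoe, HahnSeries.coeff_mul_single_add]
      by_cases h1 : l = M
      · rw [if_pos h1, if_neg (by omega), add_zero, h1,
          show (-1 - (M - M) : ℤ) = -1 by ring, hFm1]
      · by_cases h2 : l = M - 1
        · rw [if_neg h1, if_pos h2, zero_add, h2,
            show (-1 - (M - (M - 1)) : ℤ) = -2 by ring, hFm2]
        · rw [if_neg h1, if_neg h2, add_zero]
          rw [hFlow (M - l) (by omega), zero_mul]
    rw [Finset.sum_congr rfl hpt, Finset.sum_add_distrib,
      Finset.sum_ite_eq' (Finset.Icc (0:ℤ) M) M, Finset.sum_ite_eq' (Finset.Icc (0:ℤ) M) (M-1)]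
    by_cases hM0 : 0 ≤ M
    · rw [if_pos (Finset.mem_Icc.mpr ⟨hM0, le_refl M⟩)]
      by_cases hM1 : 0 ≤ M - 1
      · rw [if_pos (Finset.mem_Icc.mpr ⟨hM1, by omega⟩)]
      · rw [if_neg (fun h => hM1 (Finset.mem_Icc.mp h).1),
          hctz p (M-1) β (Or.inl (by omega)), mul_zero]
    · rw [if_neg (fun h => hM0 (Finset.mem_Icc.mp h).1),
        if_neg (fun h => hM0 (le_trans (Finset.mem_Icc.mp h).1 (by omega))),
        hctz p M β (Or.inl (by omega)), hctz p (M-1) β (Or.inl (by omega)),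
        mul_zero, mul_zero, add_zero]
  rw [t1, t2]
  -- right-hand side
  rw [PowerSeries.coeff_C_mul, map_sub, PowerSeries.coeff_C_mul, map_sub,
    PowerSeries.coeff_one, map_sum, map_sum]
  have srw : ∀ c : ℕ → ℚ,
      (∑ b ∈ Finset.range (p / ν + 1),
        PowerSeries.coeff (R := ℚ) β (PowerSeries.C (R := ℚ) (c b) * PowerSeries.X ^ b))
      = if β ∈ Finset.range (p / ν + 1) then c β else 0 := by
    intro c
    rw [Finset.sum_congr rfl fun b _ => PowerSeries.coeff_C_mul_X_pow (c b) b β]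
    exact Finset.sum_ite_eq (Finset.range (p / ν + 1)) β c
  rw [srw, srw]
  by_cases hmem : β ∈ Finset.range (p / ν + 1)
  · rw [if_pos hmem, if_pos hmem]
    split_ifs <;> ring
  · have hβ : p / ν < β := by
      by_contra hc
      exact hmem (Finset.mem_range.mpr (by omega))
    have hMneg : M < 0 := by
      have h1 : p < β * ν := (Nat.div_lt_iff_lt_mul hν1).mp hβ
      have h2 : (p:ℤ) < (β:ℤ) * (ν:ℤ) := by exact_mod_cast h1
      have h3 : ((β:ℤ) * (ν:ℤ)) = (ν:ℤ) * (β:ℤ) := mul_comm _ _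
      rw [hM]
      linarith
    have hβ0 : β ≠ 0 := by
      intro h; rw [h] at hβ; exact absurd hβ (Nat.not_lt_zero _)
    rw [if_neg hmem, if_neg hmem, if_neg hβ0, if_neg hβ0,
      hctz p M β (Or.inl hMneg), hctz p (M-1) β (Or.inl (by omega))]
    ring
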